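/- Let 1 ≤ k < m and let λ ∈ ℝ^m satisfy S_j(λ) ≥ 0 for all j = 1,…,k. Then for every i = 1,…,m one has −λ_i ≤ [ (m−k) / ( k(m−1) ) ] · S_{1,i}(λ), i.e. the smallest value −λ_i can take is controlled by the sum of the remaining entries. -/

import Mathlib

open MeasureTheory Filter Topology

noncomputable section

/-- Action of a first-order vector field with coefficient vector `c` on a function `u`:
`(Xu)(x) = ∑ j c(x)_j D_j u(x) = Du(x)·c(x)`. -/
def Xop {n : ℕ} (c : (Fin n → ℝ) → (Fin n → ℝ)) (u : (Fin n → ℝ) → ℝ)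
    (x : Fin n → ℝ) : ℝ :=
  fderiv ℝ u x (c x)

/-- Lie bracket of the coefficient vector fields `c`, `d`. -/
def vfBracket {n : ℕ} (c d : (Fin n → ℝ) → (Fin n → ℝ)) (x : Fin n → ℝ) :
    Fin n → ℝ :=
  fun l => fderiv ℝ (fun y => d y l) x (c x) - fderiv ℝ (fun y => c y l) x (d x)

/-- The sub-Laplacian `Δ_X u = ∑ i X_i X_i u`. -/
def subLap {n m : ℕ} (b : Fin m → (Fin n → ℝ) → (Fin n → ℝ))
    (u : (Fin n → ℝ) → ℝ) (x : Fin n → ℝ) : ℝ :=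
  ∑ i, Xop (b i) (Xop (b i) u) x

/-- The commutator `[X_i, X_j] u = X_i X_j u - X_j X_i u`. -/
def commOp {n m : ℕ} (b : Fin m → (Fin n → ℝ) → (Fin n → ℝ)) (i j : Fin m)
    (u : (Fin n → ℝ) → ℝ) (x : Fin n → ℝ) : ℝ :=
  Xop (b i) (Xop (b j) u) x - Xop (b j) (Xop (b i) u) x

/-- The symmetric Hessian `X_s² u = [½ (X_i X_j + X_j X_i) u]`. -/
def symmHess {n m : ℕ} (b : Fin m → (Fin n → ℝ) → (Fin n → ℝ))
    (u : (Fin n → ℝ) → ℝ) (x : Fin n → ℝ) : Matrix (Fin m) (Fin m) ℝ :=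
  fun i j => (Xop (b i) (Xop (b j) u) x + Xop (b j) (Xop (b i) u) x) / 2

theorem symmHess_isHermitian {n m : ℕ} (b : Fin m → (Fin n → ℝ) → (Fin n → ℝ))
    (u : (Fin n → ℝ) → ℝ) (x : Fin n → ℝ) : (symmHess b u x).IsHermitian := by
  unfold Matrix.IsHermitian
  ext i j
  simp only [Matrix.conjTranspose_apply, symmHess, star_trivial]
  ring

/-- Eigenvalues of the symmetric Hessian. -/
def hessEig {n m : ℕ} (b : Fin m → (Fin n → ℝ) → (Fin n → ℝ))
    (u : (Fin n → ℝ) → ℝ) (x : Fin n → ℝ) : Fin m → ℝ :=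
  (symmHess_isHermitian b u x).eigenvalues

/-- `k`-th elementary symmetric function of `m` real numbers. -/
def esymmF {m : ℕ} (k : ℕ) (lam : Fin m → ℝ) : ℝ :=
  ∑ s ∈ Finset.powersetCard k (Finset.univ : Finset (Fin m)), ∏ i ∈ s, lam i

/-- `S_{j,i}(λ)`: the `j`-th elementary symmetric function with the variable `λ_i` set to `0`. -/
def esymmDrop {m : ℕ} (j : ℕ) (i : Fin m) (lam : Fin m → ℝ) : ℝ :=
  ∑ s ∈ Finset.powersetCard j ((Finset.univ : Finset (Fin m)).erase i), ∏ l ∈ s, lam l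

/-- `u` is `k`-convex with respect to the vector fields `b` on `Ω`:
`S_j(λ(X_s²u)) ≥ 0` on `Ω` for `j = 1, …, k`. -/
def IsKConvex {n m : ℕ} (Ω : Set (Fin n → ℝ)) (b : Fin m → (Fin n → ℝ) → (Fin n → ℝ))
    (k : ℕ) (u : (Fin n → ℝ) → ℝ) : Prop :=
  ∀ x ∈ Ω, ∀ j, 1 ≤ j → j ≤ k → 0 ≤ esymmF j (hessEig b u x)

/-- `F_2[u] = S_2(λ(X_s²u))`. -/
def F2fun {n m : ℕ} (b : Fin m → (Fin n → ℝ) → (Fin n → ℝ))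
    (u : (Fin n → ℝ) → ℝ) (x : Fin n → ℝ) : ℝ :=
  esymmF 2 (hessEig b u x)

/-- `𝓔_2[u] = ∑_{i<j} ([X_i,X_j]u)²`. -/
def E2fun {n m : ℕ} (b : Fin m → (Fin n → ℝ) → (Fin n → ℝ))
    (u : (Fin n → ℝ) → ℝ) (x : Fin n → ℝ) : ℝ :=
  ∑ i : Fin m, ∑ j ∈ Finset.Ioi i, (commOp b i j u x) ^ 2

/-- `𝓕_2[u] = F_2[u] + (3/4) 𝓔_2[u]`. -/
def calF2 {n m : ℕ} (b : Fin m → (Fin n → ℝ) → (Fin n → ℝ))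
    (u : (Fin n → ℝ) → ℝ) (x : Fin n → ℝ) : ℝ :=
  F2fun b u x + (3 / 4) * E2fun b u x

/-- `|Xu|(x)`, the length of the subelliptic gradient. -/
def XgradNorm {n m : ℕ} (b : Fin m → (Fin n → ℝ) → (Fin n → ℝ))
    (u : (Fin n → ℝ) → ℝ) (x : Fin n → ℝ) : ℝ :=
  Real.sqrt (∑ i, (Xop (b i) u x) ^ 2)

/-- Condition (i): each `X_i` is divergence free, i.e. anti-self-adjoint. -/
def DivFree {n m : ℕ} (Ω : Set (Fin n → ℝ))
    (b : Fin m → (Fin n → ℝ) → (Fin n → ℝ)) : Prop :=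
  ∀ i : Fin m, ∀ x ∈ Ω, ∑ j, fderiv ℝ (fun y => b i y j) x (Pi.single j 1) = 0

/-- The set of iterated Lie brackets generated by the fields `b`. -/
inductive LieGen {n m : ℕ} (b : Fin m → (Fin n → ℝ) → (Fin n → ℝ)) :
    ((Fin n → ℝ) → (Fin n → ℝ)) → Prop
  | base (i : Fin m) : LieGen b (b i)
  | bracket {c d : (Fin n → ℝ) → (Fin n → ℝ)} :
      LieGen b c → LieGen b d → LieGen b (fun x => vfBracket c d x)

/-- Condition (ii): the Hörmander condition; iterated commutators span `ℝⁿ` at each point. -/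
def Hormander {n m : ℕ} (Ω : Set (Fin n → ℝ))
    (b : Fin m → (Fin n → ℝ) → (Fin n → ℝ)) : Prop :=
  ∀ x ∈ Ω, Submodule.span ℝ {v : Fin n → ℝ | ∃ c, LieGen b c ∧ c x = v} = ⊤

/-- Condition (iii): all second commutators `[X_i,[X_i,X_j]]` vanish. -/
def SecondCommVanish {n m : ℕ} (Ω : Set (Fin n → ℝ))
    (b : Fin m → (Fin n → ℝ) → (Fin n → ℝ)) : Prop :=
  ∀ i j : Fin m, ∀ x ∈ Ω, vfBracket (b i) (fun y => vfBracket (b i) (b j) y) x = 0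

/-- `Ω' ⊂⊂ Ω`: `Ω'` is open and compactly contained in `Ω`. -/
def CptIn {n : ℕ} (Ω' Ω : Set (Fin n → ℝ)) : Prop :=
  IsOpen Ω' ∧ IsCompact (closure Ω') ∧ closure Ω' ⊆ Ω

/-- A sub-unitary (piecewise C¹) curve on `[0,T]` with respect to the fields `b`. -/
def IsSubunitary {n m : ℕ} (b : Fin m → (Fin n → ℝ) → (Fin n → ℝ)) (T : ℝ)
    (γ : ℝ → Fin n → ℝ) : Prop :=
  ContinuousOn γ (Set.Icc 0 T) ∧
  ∃ S : Finset ℝ, ∀ t ∈ Set.Ioo 0 T, t ∉ S →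
    ∃ γ' : Fin n → ℝ, HasDerivAt γ γ' t ∧
      ∀ ξ : Fin n → ℝ, (∑ j, γ' j * ξ j) ^ 2 ≤ ∑ i, (∑ j, b i (γ t) j * ξ j) ^ 2

/-- The Carnot–Carathéodory distance associated with the fields `b`. -/
def ccDist {n m : ℕ} (b : Fin m → (Fin n → ℝ) → (Fin n → ℝ))
    (x y : Fin n → ℝ) : ℝ :=
  sInf {T : ℝ | 0 < T ∧ ∃ γ : ℝ → Fin n → ℝ,
    IsSubunitary b T γ ∧ γ 0 = x ∧ γ T = y}

/-- The C-C ball of radius `R` about `x`. -/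
def ccBall {n m : ℕ} (b : Fin m → (Fin n → ℝ) → (Fin n → ℝ))
    (x : Fin n → ℝ) (R : ℝ) : Set (Fin n → ℝ) :=
  {y | ccDist b x y < R}

/-- The doubling property `|B_{tR}(x)| ≥ C t^Q |B_R(x)|`. -/
def DoublingDim {n m : ℕ} (Ω : Set (Fin n → ℝ))
    (b : Fin m → (Fin n → ℝ) → (Fin n → ℝ)) (Q : ℕ) : Prop :=
  ∃ C > (0 : ℝ), ∃ R0 > (0 : ℝ), ∀ x ∈ Ω, ∀ t ∈ Set.Ioo (0 : ℝ) 1,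
    ∀ R : ℝ, 0 < R → R < R0 →
      C * t ^ Q * (volume (ccBall b x R)).toReal ≤ (volume (ccBall b x (t * R))).toReal

/-- `Q` is the homogeneous dimension of the system `b` in `Ω`. -/
def IsHomDim {n m : ℕ} (Ω : Set (Fin n → ℝ))
    (b : Fin m → (Fin n → ℝ) → (Fin n → ℝ)) (Q : ℕ) : Prop :=
  0 < Q ∧ DoublingDim Ω b Q ∧ ∀ Q' : ℕ, 0 < Q' → DoublingDim Ω b Q' → Q ≤ Q'

/-- The class `φ^k(Ω)` of `L¹_loc(Ω)` limits of smooth `k`-convex functions. -/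
def PhiK {n m : ℕ} (Ω : Set (Fin n → ℝ)) (b : Fin m → (Fin n → ℝ) → (Fin n → ℝ))
    (k : ℕ) (u : (Fin n → ℝ) → ℝ) : Prop :=
  LocallyIntegrableOn u Ω ∧
  ∀ Ω' : Set (Fin n → ℝ), CptIn Ω' Ω →
    ∃ us : ℕ → (Fin n → ℝ) → ℝ,
      (∀ l, ContDiffOn ℝ 2 (us l) Ω' ∧ IsKConvex Ω' b k (us l)) ∧
      ∀ K : Set (Fin n → ℝ), K ⊆ Ω' → IsCompact K →
        Tendsto (fun l => ∫ x in K, |us l x - u x|) atTop (𝓝 0)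

end

section MaclaurinAux

open Polynomial

private lemma aux_esymm_zero (s : Multiset ℝ) : s.esymm 0 = 1 := by
  simp [Multiset.esymm]

private lemma aux_esymm_of_lt {s : Multiset ℝ} {k : ℕ} (h : Multiset.card s < k) :
    s.esymm k = 0 := by
  simp [Multiset.esymm, Multiset.powersetCard_eq_empty _ h]

private lemma aux_esymm_cons (a : ℝ) (s : Multiset ℝ) (k : ℕ) :
    (a ::ₘ s).esymm (k + 1) = s.esymm (k + 1) + a * s.esymm k := by
  simp only [Multiset.esymm, Multiset.powersetCard_cons, Multiset.map_add, Multiset.sum_add,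
    Multiset.map_map, Function.comp]
  congr 1
  rw [← Multiset.sum_map_mul_left]
  congr 1
  apply Multiset.map_congr rfl
  intro t _
  simp [Multiset.prod_cons]

/-- Newton's inequality at the top: for a multiset of `M+2` reals,
`2(M+2) e_M e_{M+2} ≤ (M+1) e_{M+1}^2`. -/
private lemma aux_bot (s : Multiset ℝ) : ∀ M : ℕ, Multiset.card s = M + 2 →
    2 * ((M : ℝ) + 2) * (s.esymm M * s.esymm (M + 2)) ≤ ((M : ℝ) + 1) * (s.esymm (M + 1)) ^ 2 := by
  induction s using Multiset.induction with
  | empty => intro M h; simp at h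
  | cons a t ih =>
    intro M h
    rw [Multiset.card_cons] at h
    have hct : Multiset.card t = M + 1 := by omega
    match M with
    | 0 =>
      obtain ⟨b, rfl⟩ := Multiset.card_eq_one.mp hct
      have h0 : ({b} : Multiset ℝ).esymm 0 = 1 := aux_esymm_zero _
      have h1 : ({b} : Multiset ℝ).esymm 1 = b := by
        have := aux_esymm_cons b 0 0
        have h0' : (0 : Multiset ℝ).esymm 1 = 0 := aux_esymm_of_lt (by simp)
        simpa [aux_esymm_zero, h0'] using this
      have h2 : ({b} : Multiset ℝ).esymm 2 = 0 := aux_esymm_of_lt (by simp)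
      have e1 : (a ::ₘ {b}).esymm 1 = a + b := by
        rw [aux_esymm_cons, h1, h0]; ring
      have e2 : (a ::ₘ {b}).esymm 2 = a * b := by
        rw [aux_esymm_cons, h2, h1]; ring
      rw [e1, e2, aux_esymm_zero]
      push_cast
      nlinarith [sq_nonneg (a - b)]
    | M' + 1 =>
      have hIH := ih M' (by omega)
      set A1 := t.esymm (M' + 2) with hA1
      set A2 := t.esymm (M' + 1) with hA2
      set A3 := t.esymm M' with hA3
      have e1 : (a ::ₘ t).esymm (M' + 1) = A2 + a * A3 := aux_esymm_cons a t M'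
      have e2 : (a ::ₘ t).esymm (M' + 2) = A1 + a * A2 := aux_esymm_cons a t (M' + 1)
      have e3 : (a ::ₘ t).esymm (M' + 3) = a * A1 := by
        rw [aux_esymm_cons, aux_esymm_of_lt (by omega)]; ring
      have h3 : (M' + 1 : ℕ) + 2 = M' + 3 := by ring
      rw [show (M':ℕ) + 1 + 2 = M' + 3 from rfl, show (M':ℕ) + 1 + 1 = M' + 2 from rfl, e1, e2, e3]
      push_cast
      nlinarith [sq_nonneg (a * A2 - ((M' : ℝ) + 2) * A1), mul_nonneg (sq_nonneg a)
        (sub_nonneg.mpr hIH), sq_nonneg A1]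

private lemma aux_iter_deriv (q : ℝ[X]) (n : ℕ) (hdeg : q.natDegree = n)
    (hroots : Multiset.card q.roots = n) :
    ∀ i ≤ n, (derivative^[i] q).natDegree = n - i ∧
      Multiset.card (derivative^[i] q).roots = n - i := by
  intro i hi
  induction i with
  | zero => simpa using ⟨hdeg, hroots⟩
  | succ i ih =>
    obtain ⟨h1, h2⟩ := ih (by omega)
    set pi := derivative^[i] q with hpi
    have hne : pi ≠ 0 := by
      intro h0
      rw [h0] at h2
      simp at h2
      omega
    have hcoeff : (derivative pi).coeff (pi.natDegree - 1) ≠ 0 := by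
      rw [coeff_derivative]
      have h3 : pi.natDegree - 1 + 1 = pi.natDegree := by omega
      rw [h3, coeff_natDegree]
      have hl : pi.leadingCoeff ≠ 0 := leadingCoeff_ne_zero.mpr hne
      have : ((pi.natDegree - 1 : ℕ) : ℝ) + 1 ≠ 0 := by positivity
      exact mul_ne_zero hl this
    have hup : (derivative pi).natDegree ≤ n - (i + 1) := by
      have := natDegree_derivative_le pi
      omega
    have hlow : n - (i + 1) ≤ (derivative pi).natDegree := by
      have := le_natDegree_of_ne_zero hcoeff
      omega
    have hdeg' : (derivative pi).natDegree = n - (i + 1) := le_antisymm hup hlow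
    have hrle : Multiset.card (derivative pi).roots ≤ n - (i + 1) := by
      have := card_roots' (derivative pi)
      omega
    have hrge : n - (i + 1) ≤ Multiset.card (derivative pi).roots := by
      have := card_roots_le_derivative pi
      omega
    rw [Function.iterate_succ_apply', ← hpi]
    exact ⟨hdeg', le_antisymm hrle hrge⟩

private lemma aux_newton (s : Multiset ℝ) (n p : ℕ) (hc : Multiset.card s = n)
    (hpn : p + 2 ≤ n) :
    ((p : ℝ) + 2) * ((n : ℝ) - p) * (s.esymm p * s.esymm (p + 2)) ≤
      ((p : ℝ) + 1) * ((n : ℝ) - p - 1) * (s.esymm (p + 1)) ^ 2 := by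
  classical
  set q : ℝ[X] := (s.map fun a => X - C a).prod with hq
  have hq_monic : q.Monic :=
    monic_multiset_prod_of_monic s _ (fun a _ => monic_X_sub_C a)
  have hq_roots : q.roots = s := roots_multiset_prod_X_sub_C s
  have hq_card_roots : Multiset.card q.roots = n := by rw [hq_roots, hc]
  have hdeg_le : q.natDegree ≤ n := by
    refine le_trans (natDegree_multiset_prod_le _) ?_
    rw [Multiset.map_map]
    have : (s.map fun a => ((X : ℝ[X]) - C a).natDegree) = s.map fun _ => 1 := by
      apply Multiset.map_congr rfl
      intro a _
      exact natDegree_X_sub_C a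
    rw [show (Multiset.map (Polynomial.natDegree ∘ fun a => X - C a) s)
        = s.map fun a => ((X : ℝ[X]) - C a).natDegree from rfl, this]
    simp [hc]
  have hdeg : q.natDegree = n :=
    le_antisymm hdeg_le (hq_card_roots ▸ card_roots' q)
  set e : ℕ := n - p - 2 with he
  have hne : n = e + p + 2 := by omega
  obtain ⟨hrdeg, hrroots⟩ := aux_iter_deriv q n hdeg hq_card_roots e (by omega)
  set r : ℝ[X] := derivative^[e] q with hr
  have hrdeg' : r.natDegree = p + 2 := by rw [hrdeg]; omega
  have hrroots' : Multiset.card r.roots = p + 2 := by rw [hrroots]; omega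
  have hsplit : Splits r := by
    rw [splits_iff_card_roots, hrroots', hrdeg']
  have hfac := (C_leadingCoeff_mul_prod_multiset_X_sub_C (hrroots'.trans hrdeg'.symm)).symm
  set ρ : Multiset ℝ := r.roots with hρ
  set lc : ℝ := r.leadingCoeff with hlc
  -- key coefficient identity
  have key : ∀ u, u ≤ 2 → lc * ρ.esymm (p + 2 - u)
      = (((u + e).descFactorial e : ℕ) : ℝ) * s.esymm (p + 2 - u) := by
    intro u hu
    have hA : r.coeff u = lc * ((-1) ^ (p + 2 - u) * ρ.esymm (p + 2 - u)) := by
      conv_lhs => rw [hfac]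
      rw [coeff_C_mul]
      rw [Multiset.prod_X_sub_C_coeff ρ (by rw [hrroots']; omega)]
      rw [hrroots']
    have hB : r.coeff u = (((u + e).descFactorial e : ℕ) : ℝ) * q.coeff (u + e) := by
      rw [hr, coeff_iterate_derivative, nsmul_eq_mul]
    have hC : q.coeff (u + e) = (-1) ^ (p + 2 - u) * s.esymm (p + 2 - u) := by
      rw [hq, Multiset.prod_X_sub_C_coeff s (by rw [hc]; omega), hc,
        show n - (u + e) = p + 2 - u by omega]
    have hsgn : ((-1 : ℝ) ^ (p + 2 - u)) ≠ 0 := pow_ne_zero _ (by norm_num)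
    have heq : (-1 : ℝ) ^ (p + 2 - u) * (lc * ρ.esymm (p + 2 - u))
        = (-1 : ℝ) ^ (p + 2 - u) * ((((u + e).descFactorial e : ℕ) : ℝ) * s.esymm (p + 2 - u)) := by
      have h1 : lc * ((-1) ^ (p + 2 - u) * ρ.esymm (p + 2 - u))
          = (((u + e).descFactorial e : ℕ) : ℝ) * ((-1) ^ (p + 2 - u) * s.esymm (p + 2 - u)) := by
        rw [← hA, hB, hC]
      linear_combination h1
    exact mul_left_cancel₀ hsgn heq
  -- descFactorial identities
  have n1 : ((1 + e).descFactorial e) = (e + 1) * e.descFactorial e := by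
    have a1 : (e + 1).descFactorial (e + 1) = (e + 1) * e.descFactorial e :=
      Nat.succ_descFactorial_succ e e
    have a2 : (e + 1).descFactorial (e + 1) = (e + 1 - e) * (e + 1).descFactorial e :=
      Nat.descFactorial_succ (e + 1) e
    simp only [show e + 1 - e = 1 by omega, one_mul] at a2
    rw [show 1 + e = e + 1 by omega, ← a2, a1]
  have n2 : 2 * ((2 + e).descFactorial e) = (e + 2) * ((e + 1) * e.descFactorial e) := by
    have a1 : (e + 2).descFactorial (e + 1) = (e + 2) * ((e + 1).descFactorial e) :=
      Nat.succ_descFactorial_succ (e + 1) e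
    have a2 : (e + 2).descFactorial (e + 1) = (e + 2 - e) * (e + 2).descFactorial e :=
      Nat.descFactorial_succ (e + 2) e
    simp only [show e + 2 - e = 2 by omega] at a2
    have a3 : (e + 1).descFactorial e = (e + 1) * e.descFactorial e := by
      rw [show e + 1 = 1 + e by omega, n1]; ring
    rw [show 2 + e = e + 2 by omega, ← a2, a1, a3]
  set d0 : ℝ := ((e.descFactorial e : ℕ) : ℝ) with hd0
  have hd0pos : 0 < d0 := by
    rw [hd0]
    have : 0 < e.descFactorial e := by
      rw [Nat.descFactorial_self]; exact e.factorial_pos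
    exact_mod_cast this
  have k0 : lc * ρ.esymm (p + 2) = d0 * s.esymm (p + 2) := by
    have := key 0 (by omega); simpa using this
  have k1 : lc * ρ.esymm (p + 1) = ((e : ℝ) + 1) * d0 * s.esymm (p + 1) := by
    have := key 1 (by omega)
    rw [show p + 2 - 1 = p + 1 by omega] at this
    rw [this, n1]
    push_cast
    ring
  have k2 : 2 * (lc * ρ.esymm p) = ((e : ℝ) + 2) * (((e : ℝ) + 1) * d0) * s.esymm p := by
    have := key 2 (by omega)
    rw [show p + 2 - 2 = p by omega] at this
    have hcst : ((((2 + e).descFactorial e : ℕ)) : ℝ) * 2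
        = ((e : ℝ) + 2) * (((e : ℝ) + 1) * d0) := by
      have hn2 := congrArg (Nat.cast : ℕ → ℝ) n2
      push_cast at hn2
      show ((((2 + e).descFactorial e : ℕ)) : ℝ) * 2
        = ((e : ℝ) + 2) * (((e : ℝ) + 1) * ((e.descFactorial e : ℕ) : ℝ))
      linarith
    linear_combination 2 * this + s.esymm p * hcst
  have bot := aux_bot ρ p hrroots'
  have H1 : ((p : ℝ) + 2) * ((2 * (lc * ρ.esymm p)) * (lc * ρ.esymm (p + 2)))
      ≤ ((p : ℝ) + 1) * (lc * ρ.esymm (p + 1)) ^ 2 := by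
    nlinarith [mul_nonneg (sq_nonneg lc) (sub_nonneg.mpr bot)]
  rw [k0, k1, k2] at H1
  have hcast : (n : ℝ) = (e : ℝ) + p + 2 := by
    rw [hne]; push_cast; ring
  rw [hcast]
  have hpos : 0 < ((e : ℝ) + 1) * d0 ^ 2 := by positivity
  refine le_of_mul_le_mul_right ?_ hpos
  nlinarith [H1]

private lemma aux_chain (s : Multiset ℝ) (n : ℕ) (hs : Multiset.card s = n) (k : ℕ)
    (hkn : k ≤ n) (hp : ∀ j, j ≤ k → 0 < s.esymm j) :
    ∀ p, p + 1 ≤ k → ((p : ℝ) + 1) * (n : ℝ) * s.esymm (p + 1)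
      ≤ ((n : ℝ) - p) * s.esymm 1 * s.esymm p := by
  intro p
  induction p with
  | zero =>
    intro _
    rw [aux_esymm_zero]
    push_cast
    have : ((0 : ℝ) + 1) * (n : ℝ) * s.esymm (0 + 1) = ((n : ℝ) - 0) * s.esymm 1 * 1 := by
      norm_num
    linarith [this]
  | succ p ih =>
    intro h2
    have ihp := ih (by omega)
    have newton := aux_newton s n p hs (by omega)
    have e1pos := hp 1 (by omega)
    have eppos := hp p (by omega)
    have ep1pos := hp (p + 1) (by omega)
    have ep2pos := hp (p + 2) (by omega)
    have step1 : ((p : ℝ) + 1) * ((p : ℝ) + 2) * n * (s.esymm (p + 1) * s.esymm (p + 2))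
        ≤ ((p : ℝ) + 2) * s.esymm (p + 2) * (((n : ℝ) - p) * s.esymm 1 * s.esymm p) := by
      nlinarith [mul_le_mul_of_nonneg_left ihp
        (show (0 : ℝ) ≤ ((p : ℝ) + 2) * s.esymm (p + 2) by positivity)]
    have step2 : ((p : ℝ) + 2) * s.esymm (p + 2) * (((n : ℝ) - p) * s.esymm 1 * s.esymm p)
        ≤ s.esymm 1 * (((p : ℝ) + 1) * ((n : ℝ) - p - 1) * (s.esymm (p + 1)) ^ 2) := by
      nlinarith [mul_le_mul_of_nonneg_left newton (le_of_lt e1pos)]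
    have hpos : (0 : ℝ) < ((p : ℝ) + 1) * s.esymm (p + 1) := by positivity
    have goal' : (((p : ℝ) + 1 + 1) * (n : ℝ) * s.esymm (p + 1 + 1)) * (((p : ℝ) + 1) * s.esymm (p + 1))
        ≤ (((n : ℝ) - (p + 1)) * s.esymm 1 * s.esymm (p + 1)) * (((p : ℝ) + 1) * s.esymm (p + 1)) := by
      nlinarith [step1, step2]
    have := le_of_mul_le_mul_right goal' hpos
    push_cast
    push_cast at this
    linarith

end MaclaurinAux

/-- estimate (3.7) with MacLaurin's inequality. If `S_j(λ) ≥ 0`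
for `j = 1, …, k` and `1 ≤ k < m`, then `-λ_i ≤ (m-k)/(k(m-1)) · S_{1,i}(λ)`. -/
theorem neg_eig_le_maclaurin (m k : ℕ) (hk1 : 1 ≤ k) (hkm : k < m)
    (lam : Fin m → ℝ) (hpos : ∀ j, 1 ≤ j → j ≤ k → 0 ≤ esymmF j lam) :
    ∀ i : Fin m, -lam i ≤
      (((m : ℝ) - (k : ℝ)) / ((k : ℝ) * ((m : ℝ) - 1))) * esymmDrop 1 i lam := by
  intro i
  have hm2 : 2 ≤ m := by omega
  have hmR : (2 : ℝ) ≤ (m : ℝ) := by exact_mod_cast hm2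
  have hkR : (1 : ℝ) ≤ (k : ℝ) := by exact_mod_cast hk1
  have hkmR : (k : ℝ) < (m : ℝ) := by exact_mod_cast hkm
  set t : Multiset ℝ := ((Finset.univ : Finset (Fin m)).erase i).val.map lam with ht
  have hcardt : Multiset.card t = m - 1 := by
    rw [ht, Multiset.card_map, Finset.erase_val,
      Multiset.card_erase_of_mem (by simp)]
    simp
  have hdrop : ∀ j, esymmDrop j i lam = t.esymm j := by
    intro j
    rw [ht, Finset.esymm_map_val]
    rfl
  have hfull : ∀ j, esymmF j lam = (lam i ::ₘ t).esymm j := by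
    intro j
    have hv : ((Finset.univ : Finset (Fin m)).val.map lam) = lam i ::ₘ t := by
      rw [ht, Finset.erase_val, ← Multiset.map_cons,
        Multiset.cons_erase (by simp : i ∈ (Finset.univ : Finset (Fin m)).val)]
    rw [← hv, Finset.esymm_map_val]
    rfl
  have hS : ∀ j, esymmF (j + 1) lam = t.esymm (j + 1) + lam i * t.esymm j := by
    intro j
    rw [hfull, aux_esymm_cons]
  have hK : (0 : ℝ) < (k : ℝ) * ((m : ℝ) - 1) := by nlinarith
  rw [hdrop 1, div_mul_eq_mul_div, le_div_iff₀ hK]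
  have hcmp : (m : ℝ) - k ≤ (k : ℝ) * ((m : ℝ) - 1) := by nlinarith
  rcases le_or_gt 0 (lam i) with hpos0 | hneg
  · -- λ_i ≥ 0
    have hS1 : 0 ≤ t.esymm 1 + lam i := by
      have h := hpos 1 le_rfl hk1
      rw [show (1 : ℕ) = 0 + 1 from rfl, hS 0, aux_esymm_zero] at h
      linarith
    nlinarith [mul_nonneg (sub_nonneg.mpr hcmp) hpos0,
      mul_nonneg (le_of_lt (by linarith : (0:ℝ) < (m : ℝ) - k)) hS1]
  · -- λ_i < 0
    obtain ⟨p, rfl⟩ : ∃ p, k = p + 1 := ⟨k - 1, by omega⟩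
    have hPOS : ∀ j, j ≤ p + 1 → 0 < t.esymm j := by
      intro j hj
      induction j with
      | zero => rw [aux_esymm_zero]; norm_num
      | succ j ihj =>
        have hj' := ihj (by omega)
        have h := hpos (j + 1) (by omega) hj
        rw [hS j] at h
        nlinarith
    have hnR : (((m - 1 : ℕ) : ℕ) : ℝ) = (m : ℝ) - 1 := by
      push_cast [Nat.cast_sub (by omega : 1 ≤ m)]
      ring
    have hchain := aux_chain t (m - 1) hcardt (p + 1) (by omega) hPOS p le_rfl
    rw [hnR] at hchain
    have hSk := hpos (p + 1) (by omega) le_rfl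
    rw [hS p] at hSk
    have hep := hPOS p (by omega)
    have hep1 := hPOS (p + 1) le_rfl
    have he1 := hPOS 1 (by omega)
    refine le_of_mul_le_mul_right ?_ hep
    have hfac : (0 : ℝ) ≤ ((p : ℝ) + 1) * ((m : ℝ) - 1) := by nlinarith
    -- (-λi * ((p+1)(m-1))) * e_p ≤ ((p+1)(m-1)) * e_{p+1} ≤ (m-(p+1)) * e_1 * e_p
    have s1 : ((p : ℝ) + 1) * ((m : ℝ) - 1) * (-lam i * t.esymm p)
        ≤ ((p : ℝ) + 1) * ((m : ℝ) - 1) * t.esymm (p + 1) :=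
      mul_le_mul_of_nonneg_left (by linarith) hfac
    push_cast
    nlinarith [s1, hchain]
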